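/- Let G be a finite group and Ĝ a complete set of pairwise inequivalent irreducible complex matrix representations of G. Then for every u : G → ℂ and every g ∈ G, the Fourier inversion formula holds: u(g) = (1/|G|) ∑_{ρ∈Ĝ} d_ρ · Tr(ρ(g⁻¹) · F(u)(ρ)), where d_ρ is the degree of ρ and F(u)(ρ) = ∑_{h∈G} u(h) ρ(h). -/

import Mathlib

/-- A matrix representation of `G`: every `ρ g` is invertible and `ρ` is
multiplicative. -/
def IsMatRep {G : Type*} [Group G] {n : Type*} [Fintype n] [DecidableEq n]
    (ρ : G → Matrix n n ℂ) : Prop :=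
  (∀ g, IsUnit (ρ g)) ∧ ∀ g h : G, ρ (g * h) = ρ g * ρ h

/-- Irreducibility: the only subspaces of `ℂ^n` invariant under all `ρ g` are
`⊥` and `⊤`. -/
def IsIrredRep {G : Type*} [Group G] {n : Type*} [Fintype n] [DecidableEq n]
    (ρ : G → Matrix n n ℂ) : Prop :=
  ∀ W : Submodule ℂ (n → ℂ), (∀ g : G, ∀ x ∈ W, (ρ g).mulVec x ∈ W) → W = ⊥ ∨ W = ⊤

/-- Equivalence of matrix representations: `ρ(g) = T⁻¹ σ(g) T` for a fixed
invertible `T` (encoded by a two-sided inverse pair `T, T'`). -/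
def RepEquiv {G : Type*} [Group G] {n m : Type*} [Fintype n] [DecidableEq n]
    [Fintype m] [DecidableEq m]
    (ρ : G → Matrix n n ℂ) (σ : G → Matrix m m ℂ) : Prop :=
  ∃ (T : Matrix m n ℂ) (T' : Matrix n m ℂ),
    T * T' = 1 ∧ T' * T = 1 ∧ ∀ g : G, ρ g = T' * σ g * T

open Matrix

section Basics
variable {G : Type*} [Group G]
variable {n m : Type*} [Fintype n] [DecidableEq n] [Fintype m] [DecidableEq m]

lemma IsMatRep.one {ρ : G → Matrix n n ℂ} (h : IsMatRep ρ) : ρ 1 = 1 := by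
  have h1 : ρ 1 * ρ 1 = ρ 1 * 1 := by rw [← h.2 1 1, one_mul, mul_one]
  exact (h.1 1).mul_left_cancel h1

lemma IsMatRep.mul_inv {ρ : G → Matrix n n ℂ} (h : IsMatRep ρ) (g : G) :
    ρ g * ρ g⁻¹ = 1 := by rw [← h.2, mul_inv_cancel, h.one]

lemma IsMatRep.inv_mul {ρ : G → Matrix n n ℂ} (h : IsMatRep ρ) (g : G) :
    ρ g⁻¹ * ρ g = 1 := by rw [← h.2, inv_mul_cancel, h.one]

lemma RepEquiv.trace_eq {ρ : G → Matrix n n ℂ} {σ : G → Matrix m m ℂ}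
    (h : RepEquiv ρ σ) (g : G) : (ρ g).trace = (σ g).trace := by
  obtain ⟨T, T', hTT', hT'T, hg⟩ := h
  rw [hg, Matrix.trace_mul_cycle, hTT', one_mul]

/-- If `σ` has positive size and is equivalent to `ρ` (on `n`), then `n` is nonempty. -/
lemma RepEquiv.nonempty {ρ : G → Matrix n n ℂ} {σ : G → Matrix m m ℂ}
    (h : RepEquiv σ ρ) (hm : Nonempty m) : Nonempty n := by
  by_contra hn
  obtain ⟨T, T', hTT', hT'T, _⟩ := h
  obtain ⟨q⟩ := hm
  have := congrFun (congrFun hT'T q) q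
  rw [Matrix.mul_apply] at this
  simp only [Matrix.one_apply_eq] at this
  rw [Finset.sum_eq_zero (fun a _ => absurd ⟨a⟩ hn)] at this
  exact one_ne_zero this.symm
end Basics

section Schur
variable {G : Type*} [Group G]
variable {n m : Type*} [Fintype n] [DecidableEq n] [Fintype m] [DecidableEq m]

/-- A nonzero intertwiner between irreducible representations has a two-sided inverse. -/
lemma intertwiner_invertible {ρ : G → Matrix n n ℂ} {σ : G → Matrix m m ℂ}
    (hρ : IsIrredRep ρ) (hσ : IsIrredRep σ)
    (E : Matrix m n ℂ) (hE : ∀ g, σ g * E = E * ρ g) (hne : E ≠ 0) :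
    ∃ F : Matrix n m ℂ, E * F = 1 ∧ F * E = 1 := by
  set e : (n → ℂ) →ₗ[ℂ] (m → ℂ) := Matrix.mulVecLin E with he
  have hE0 : e ≠ 0 := by
    intro h
    apply hne
    apply Matrix.toLin'.injective
    rw [map_zero]
    exact h
  have hkerinv : ∀ g : G, ∀ x ∈ LinearMap.ker e, (ρ g).mulVec x ∈ LinearMap.ker e := by
    intro g x hx
    have hx' : E.mulVec x = 0 := hx
    show E.mulVec ((ρ g).mulVec x) = 0
    rw [Matrix.mulVec_mulVec, ← hE, ← Matrix.mulVec_mulVec, hx', Matrix.mulVec_zero]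
  have hker : LinearMap.ker e = ⊥ := by
    rcases hρ (LinearMap.ker e) hkerinv with h | h
    · exact h
    · exact absurd (LinearMap.ker_eq_top.mp h) hE0
  have hrnginv : ∀ g : G, ∀ y ∈ LinearMap.range e, (σ g).mulVec y ∈ LinearMap.range e := by
    rintro g y ⟨x, rfl⟩
    refine ⟨(ρ g).mulVec x, ?_⟩
    show E.mulVec ((ρ g).mulVec x) = (σ g).mulVec (E.mulVec x)
    rw [Matrix.mulVec_mulVec, ← hE, ← Matrix.mulVec_mulVec]
  have hrange : LinearMap.range e = ⊤ := by
    rcases hσ (LinearMap.range e) hrnginv with h | h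
    · exact absurd (LinearMap.range_eq_bot.mp h) hE0
    · exact h
  have hbij : Function.Bijective e :=
    ⟨LinearMap.ker_eq_bot.mp hker, LinearMap.range_eq_top.mp hrange⟩
  let eq := LinearEquiv.ofBijective e hbij
  refine ⟨LinearMap.toMatrix' (eq.symm : (m → ℂ) →ₗ[ℂ] (n → ℂ)), ?_, ?_⟩
  · apply Matrix.toLin'.injective
    rw [Matrix.toLin'_mul, Matrix.toLin'_one, Matrix.toLin'_toMatrix']
    exact LinearMap.ext fun y => eq.apply_symm_apply y
  · apply Matrix.toLin'.injective
    rw [Matrix.toLin'_mul, Matrix.toLin'_one, Matrix.toLin'_toMatrix']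
    exact LinearMap.ext fun x => eq.symm_apply_apply x

lemma intertwiner_repEquiv {ρ : G → Matrix n n ℂ} {σ : G → Matrix m m ℂ}
    (hρ : IsIrredRep ρ) (hσ : IsIrredRep σ)
    (E : Matrix m n ℂ) (hE : ∀ g, σ g * E = E * ρ g) (hne : E ≠ 0) :
    RepEquiv ρ σ := by
  obtain ⟨F, hEF, hFE⟩ := intertwiner_invertible hρ hσ E hE hne
  exact ⟨E, F, hEF, hFE, fun g => by
    rw [Matrix.mul_assoc, hE g, ← Matrix.mul_assoc, hFE, one_mul]⟩

/-- Schur: a matrix commuting with an irreducible representation is scalar. -/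
lemma commute_scalar [Nonempty n] {ρ : G → Matrix n n ℂ}
    (hρ : IsIrredRep ρ) (E : Matrix n n ℂ) (hE : ∀ g, ρ g * E = E * ρ g) :
    E = (E.trace / (Fintype.card n : ℂ)) • 1 := by
  obtain ⟨μ, hμ⟩ := spectrum.nonempty_of_isAlgClosed_of_finiteDimensional ℂ (A := Matrix n n ℂ) E
  have hsing : ¬ IsUnit (μ • (1 : Matrix n n ℂ) - E) := by
    rw [spectrum.mem_iff, Algebra.algebraMap_eq_smul_one] at hμ
    exact hμ
  have hE0 : E = μ • (1 : Matrix n n ℂ) := by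
    by_contra hne
    have hne' : μ • (1 : Matrix n n ℂ) - E ≠ 0 := fun h =>
      hne ((sub_eq_zero.mp h).symm)
    have hE' : ∀ g, ρ g * (μ • 1 - E) = (μ • 1 - E) * ρ g := fun g => by
      rw [Matrix.mul_sub, Matrix.sub_mul, hE g, Matrix.mul_smul, Matrix.smul_mul,
        mul_one, one_mul]
    obtain ⟨F, hEF, hFE⟩ := intertwiner_invertible hρ hρ (μ • 1 - E) hE' hne'
    exact hsing ⟨⟨μ • 1 - E, F, hEF, hFE⟩, rfl⟩
  have htr : E.trace = μ * (Fintype.card n : ℂ) := by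
    rw [hE0, Matrix.trace_smul, Matrix.trace_one, smul_eq_mul]
  rw [htr, hE0]
  congr 1
  have hc : (Fintype.card n : ℂ) ≠ 0 := Nat.cast_ne_zero.mpr Fintype.card_ne_zero
  field_simp
end Schur

section Orth
variable {G : Type*} [Group G] [Fintype G]
variable {n m : Type*} [Fintype n] [DecidableEq n] [Fintype m] [DecidableEq m]

lemma mul_stdBasisMatrix_mul {a d : Type*} (A : Matrix a n ℂ) (B : Matrix m d ℂ)
    (p : n) (q : m) (i : a) (j : d) :
    (A * Matrix.single p q (1 : ℂ) * B) i j = A i p * B q j := by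
  rw [Matrix.mul_assoc, Matrix.mul_apply]
  have hSB : ∀ t : n, (Matrix.single p q (1 : ℂ) * B) t j
      = if p = t then B q j else 0 := by
    intro t
    rw [Matrix.mul_apply]
    simp only [Matrix.single, Matrix.of_apply, ite_and, ite_mul, one_mul, zero_mul]
    by_cases h : p = t
    · simp [h, Finset.sum_ite_eq]
    · simp [h]
  simp [hSB, mul_ite, Finset.sum_ite_eq]

lemma avg_intertwine {ρ : G → Matrix n n ℂ} {σ : G → Matrix m m ℂ}
    (hρ : IsMatRep ρ) (hσ : IsMatRep σ) (M : Matrix m n ℂ) (g : G) :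
    σ g * (∑ x : G, σ x * M * ρ x⁻¹) = (∑ x : G, σ x * M * ρ x⁻¹) * ρ g := by
  rw [Matrix.mul_sum, Matrix.sum_mul]
  refine Fintype.sum_equiv (Equiv.mulLeft g) _ _ fun x => ?_
  simp only [Equiv.coe_mulLeft]
  show σ g * (σ x * M * ρ x⁻¹) = σ (g * x) * M * ρ (g * x)⁻¹ * ρ g
  have hx : (g * x)⁻¹ * g = x⁻¹ := by group
  rw [Matrix.mul_assoc (σ (g * x) * M), ← hρ.2, hx, ← Matrix.mul_assoc,
    ← Matrix.mul_assoc, ← hσ.2]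

lemma orth_ne {ρ : G → Matrix n n ℂ} {σ : G → Matrix m m ℂ}
    (hρ : IsMatRep ρ) (hσ : IsMatRep σ) (hρi : IsIrredRep ρ) (hσi : IsIrredRep σ)
    (hne : ¬ RepEquiv ρ σ) :
    ∑ x : G, (σ x).trace * (ρ x⁻¹).trace = 0 := by
  have hzero : ∀ M : Matrix m n ℂ, ∑ x : G, σ x * M * ρ x⁻¹ = 0 := by
    intro M
    by_contra h
    exact hne (intertwiner_repEquiv hρi hσi _ (avg_intertwine hρ hσ M) h)
  have key : ∀ (c : m) (q : n), ∑ x : G, σ x c c * ρ x⁻¹ q q = 0 := by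
    intro c q
    have := congrFun (congrFun (hzero (Matrix.single c q 1)) c) q
    rw [Matrix.sum_apply] at this
    simpa [mul_stdBasisMatrix_mul] using this
  calc ∑ x : G, (σ x).trace * (ρ x⁻¹).trace
      = ∑ x : G, ∑ c : m, ∑ q : n, σ x c c * ρ x⁻¹ q q := by
        refine Finset.sum_congr rfl fun x _ => ?_
        rw [Matrix.trace, Matrix.trace, Finset.sum_mul_sum]
        rfl
    _ = ∑ c : m, ∑ q : n, ∑ x : G, σ x c c * ρ x⁻¹ q q := by
        rw [Finset.sum_comm]
        exact Finset.sum_congr rfl fun c _ => Finset.sum_comm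
    _ = 0 := by simp [key]

lemma orth_self [Nonempty n] {ρ : G → Matrix n n ℂ}
    (hρ : IsMatRep ρ) (hρi : IsIrredRep ρ) :
    ∑ x : G, (ρ x).trace * (ρ x⁻¹).trace = (Fintype.card G : ℂ) := by
  have hdn : (Fintype.card n : ℂ) ≠ 0 := Nat.cast_ne_zero.mpr Fintype.card_ne_zero
  have hscalar : ∀ M : Matrix n n ℂ, ∑ x : G, ρ x * M * ρ x⁻¹ =
      (((Fintype.card G : ℂ) * M.trace) / (Fintype.card n : ℂ)) • 1 := by
    intro M
    have := commute_scalar hρi (∑ x : G, ρ x * M * ρ x⁻¹) (avg_intertwine hρ hρ M)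
    rw [this]
    congr 2
    rw [Matrix.trace_sum]
    have : ∀ x : G, (ρ x * M * ρ x⁻¹).trace = M.trace := by
      intro x
      rw [Matrix.trace_mul_cycle, hρ.inv_mul, one_mul]
    simp [this, Finset.sum_const, mul_comm]
  have key : ∀ (c q : n), ∑ x : G, ρ x c c * ρ x⁻¹ q q =
      if c = q then (Fintype.card G : ℂ) / (Fintype.card n : ℂ) else 0 := by
    intro c q
    have h2 := congrFun (congrFun (hscalar (Matrix.single c q 1)) c) q
    rw [Matrix.sum_apply] at h2
    simp only [mul_stdBasisMatrix_mul] at h2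
    rw [h2, Matrix.smul_apply, Matrix.one_apply]
    have htr : (Matrix.single c q (1 : ℂ)).trace = if c = q then 1 else 0 := by
      rw [Matrix.trace]
      by_cases h : c = q
      · subst h
        rw [if_pos rfl]
        simp [Matrix.diag, Matrix.single, Finset.sum_ite_eq]
      · rw [if_neg h]
        apply Finset.sum_eq_zero
        intro i _
        have hh : ¬(c = i ∧ q = i) := fun hc => h (hc.1.trans hc.2.symm)
        simp [Matrix.diag, Matrix.single, hh]
    rw [htr]
    by_cases h : c = q <;> simp [h]
  calc ∑ x : G, (ρ x).trace * (ρ x⁻¹).trace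
      = ∑ x : G, ∑ c : n, ∑ q : n, ρ x c c * ρ x⁻¹ q q := by
        refine Finset.sum_congr rfl fun x _ => ?_
        rw [Matrix.trace, Matrix.trace, Finset.sum_mul_sum]
        rfl
    _ = ∑ c : n, ∑ q : n, ∑ x : G, ρ x c c * ρ x⁻¹ q q := by
        rw [Finset.sum_comm]
        exact Finset.sum_congr rfl fun c _ => Finset.sum_comm
    _ = ∑ c : n, (Fintype.card G : ℂ) / (Fintype.card n : ℂ) := by
        simp [key]
    _ = (Fintype.card G : ℂ) := by
        rw [Finset.sum_const, Finset.card_univ, nsmul_eq_mul]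
        field_simp
end Orth

section Regular
open MonoidAlgebra
variable {G : Type*} [Group G] [Fintype G]

/-- Left multiplication by `single g 1` as a `ℂ`-linear endomorphism of the group algebra. -/
noncomputable def regMap (G : Type*) [Group G] (g : G) :
    MonoidAlgebra ℂ G →ₗ[ℂ] MonoidAlgebra ℂ G :=
  LinearMap.mulLeft ℂ (MonoidAlgebra.single g 1)

lemma regMap_apply (g : G) (x : MonoidAlgebra ℂ G) :
    regMap G g x = MonoidAlgebra.single g 1 * x := rfl

instance : Module.Finite ℂ (MonoidAlgebra ℂ G) :=
  Module.Finite.equiv ((Finsupp.linearEquivFunOnFinite ℂ ℂ G).symm ≪≫ₗ (MonoidAlgebra.coeffLinearEquiv ℂ).symm)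

lemma trace_regMap [DecidableEq G] (g : G) :
    LinearMap.trace ℂ (MonoidAlgebra ℂ G) (regMap G g) =
      if g = 1 then (Fintype.card G : ℂ) else 0 := by
  let b : Module.Basis G ℂ (MonoidAlgebra ℂ G) := MonoidAlgebra.basis G ℂ
  rw [LinearMap.trace_eq_matrix_trace ℂ b, Matrix.trace]
  have hdiag : ∀ h : G, (LinearMap.toMatrix b b (regMap G g)).diag h
      = if g = 1 then 1 else 0 := by
    intro h
    rw [Matrix.diag, LinearMap.toMatrix_apply]
    have hb : b h = MonoidAlgebra.single h 1 := rfl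
    rw [hb, regMap_apply, MonoidAlgebra.single_mul_single, one_mul]
    have : (b.repr (MonoidAlgebra.single (g * h) (1:ℂ))) h
        = (Finsupp.single (g * h) (1:ℂ) : G →₀ ℂ) h := rfl
    rw [this, Finsupp.single_apply]
    by_cases hg : g = 1
    · simp [hg]
    · rw [if_neg, if_neg hg]
      intro hc
      exact hg (by rwa [mul_eq_right] at hc)
  rw [Finset.sum_congr rfl fun h _ => hdiag h]
  by_cases hg : g = 1 <;> simp [hg, Finset.card_univ]

lemma regMap_mapsTo (S : Submodule (MonoidAlgebra ℂ G) (MonoidAlgebra ℂ G)) (g : G) :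
    ∀ x ∈ S.restrictScalars ℂ, regMap G g x ∈ S.restrictScalars ℂ := by
  intro x hx
  rw [Submodule.restrictScalars_mem] at hx ⊢
  rw [regMap_apply, ← smul_eq_mul]
  exact S.smul_mem _ hx

lemma regMap_mapsTo' (S : Submodule (MonoidAlgebra ℂ G) (MonoidAlgebra ℂ G)) (g : G) :
    Set.MapsTo (regMap G g) (S.restrictScalars ℂ) (S.restrictScalars ℂ) :=
  fun x hx => regMap_mapsTo S g x hx

/-- The restriction of left translation to a submodule. -/
noncomputable def regRes (S : Submodule (MonoidAlgebra ℂ G) (MonoidAlgebra ℂ G)) (g : G) :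
    (S.restrictScalars ℂ) →ₗ[ℂ] (S.restrictScalars ℂ) :=
  (regMap G g).restrict (regMap_mapsTo S g)

lemma regRes_coe (S : Submodule (MonoidAlgebra ℂ G) (MonoidAlgebra ℂ G)) (g : G)
    (x : S.restrictScalars ℂ) :
    (regRes S g x : MonoidAlgebra ℂ G) = MonoidAlgebra.single g 1 * (x : MonoidAlgebra ℂ G) := rfl

lemma regRes_mul (S : Submodule (MonoidAlgebra ℂ G) (MonoidAlgebra ℂ G)) (g h : G) :
    regRes S (g * h) = (regRes S g) ∘ₗ (regRes S h) := by
  apply LinearMap.ext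
  intro x
  apply Subtype.ext
  rw [LinearMap.comp_apply, regRes_coe, regRes_coe, regRes_coe, ← mul_assoc,
    MonoidAlgebra.single_mul_single, one_mul]

lemma regRes_one (S : Submodule (MonoidAlgebra ℂ G) (MonoidAlgebra ℂ G)) :
    regRes S 1 = LinearMap.id := by
  apply LinearMap.ext
  intro x
  apply Subtype.ext
  rw [regRes_coe, ← MonoidAlgebra.one_def, one_mul, LinearMap.id_coe, id_eq]
end Regular

section Match
variable {G : Type*} [Group G] [Fintype G]
variable {ι : Type*} [Fintype ι] {d : ι → ℕ}
  {ρ : (i : ι) → G → Matrix (Fin (d i)) (Fin (d i)) ℂ}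

set_option maxHeartbeats 1000000 in
lemma simple_trace
    (hcomplete : ∀ (k : ℕ) (σ : G → Matrix (Fin k) (Fin k) ℂ),
      IsMatRep σ → IsIrredRep σ → ∃! i : ι, RepEquiv σ (ρ i))
    (S : Submodule (MonoidAlgebra ℂ G) (MonoidAlgebra ℂ G))
    (hS : IsSimpleModule (MonoidAlgebra ℂ G) S) :
    ∃ i : ι, 0 < d i ∧
      ∀ g : G, LinearMap.trace ℂ (S.restrictScalars ℂ) (regRes S g) = (ρ i g).trace := by
  classical
  have hatom : IsAtom S := isSimpleModule_iff_isAtom.mp hS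
  set N := S.restrictScalars ℂ with hN
  set k := Module.finrank ℂ N with hk
  let b : Module.Basis (Fin k) ℂ N := Module.finBasis ℂ N
  set σ : G → Matrix (Fin k) (Fin k) ℂ :=
    fun g => LinearMap.toMatrix b b (regRes S g) with hσ
  have hmul : ∀ g h : G, σ (g * h) = σ g * σ h := by
    intro g h
    rw [hσ]
    simp only []
    rw [regRes_mul, LinearMap.toMatrix_comp b b b]
  have hone : σ 1 = 1 := by
    rw [hσ]
    simp only []
    rw [regRes_one, LinearMap.toMatrix_id]
  have hMat : IsMatRep σ := by
    refine ⟨fun g => ⟨⟨σ g, σ g⁻¹, ?_, ?_⟩, rfl⟩, hmul⟩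
    · rw [← hmul, mul_inv_cancel, hone]
    · rw [← hmul, inv_mul_cancel, hone]
  have hIrr : IsIrredRep σ := by
    intro W hW
    let e : N ≃ₗ[ℂ] (Fin k → ℂ) := b.equivFun
    set W2 : Submodule ℂ N := W.comap (e : N →ₗ[ℂ] (Fin k → ℂ)) with hW2def
    have hW2 : ∀ g : G, ∀ y : N, y ∈ W2 → regRes S g y ∈ W2 := by
      intro g y hy
      have hrepr : e (regRes S g y) = (σ g).mulVec (e y) := by
        rw [hσ]
        simp only [Module.Basis.equivFun_apply, e]
        rw [LinearMap.toMatrix_mulVec_repr b b]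
      show e (regRes S g y) ∈ W
      rw [hrepr]
      exact hW g _ hy
    set W3 : Submodule ℂ (MonoidAlgebra ℂ G) := W2.map N.subtype with hW3def
    have hW3 : ∀ g : G, ∀ x ∈ W3, MonoidAlgebra.single g (1:ℂ) * x ∈ W3 := by
      rintro g x ⟨y, hy, rfl⟩
      exact ⟨regRes S g y, hW2 g y hy, rfl⟩
    let W4 : Submodule (MonoidAlgebra ℂ G) (MonoidAlgebra ℂ G) :=
      { carrier := (W3 : Set (MonoidAlgebra ℂ G))
        add_mem' := fun ha hb => W3.add_mem ha hb
        zero_mem' := W3.zero_mem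
        smul_mem' := by
          intro a x hx
          rw [smul_eq_mul]
          have hax : a * x = a.coeff.sum fun g c => MonoidAlgebra.single g c * x := by
            conv_lhs => rw [← MonoidAlgebra.sum_coeff_single a]
            rw [Finsupp.sum_mul]
          rw [hax, Finsupp.sum]
          apply Submodule.sum_mem
          intro g _
          have hsm : MonoidAlgebra.single g (a.coeff g) * x
              = (a.coeff g) • (MonoidAlgebra.single g (1:ℂ) * x) := by
            rw [← smul_mul_assoc]
            congr 1
            rw [MonoidAlgebra.smul_single', mul_one]
          rw [hsm]
          exact W3.smul_mem _ (hW3 g x hx) }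
    have hle : W4 ≤ S := by
      rintro x ⟨y, -, rfl⟩
      exact y.2
    have hrange : W ≤ LinearMap.range (e : N →ₗ[ℂ] (Fin k → ℂ)) := by
      rw [LinearEquiv.range]
      exact le_top
    have hWW2 : W2.map (e : N →ₗ[ℂ] (Fin k → ℂ)) = W :=
      Submodule.map_comap_eq_self hrange
    rcases eq_or_lt_of_le hle with heq | hlt
    · right
      have hW2top : W2 = ⊤ := by
        rw [eq_top_iff]
        rintro y -
        have hy : (y : MonoidAlgebra ℂ G) ∈ W4 := by
          rw [heq]
          exact y.2
        obtain ⟨z, hz, hzy⟩ := hy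
        have : z = y := Subtype.ext hzy
        rwa [← this]
      rw [← hWW2, hW2top, Submodule.map_top, LinearEquiv.range]
    · left
      have hW4bot : W4 = ⊥ := hatom.2 _ hlt
      have hW2bot : W2 = ⊥ := by
        rw [eq_bot_iff]
        intro y hy
        have : (y : MonoidAlgebra ℂ G) ∈ W4 := ⟨y, hy, rfl⟩
        rw [hW4bot] at this
        have hy0 : (y : MonoidAlgebra ℂ G) = 0 := this
        have : y = 0 := Subtype.ext hy0
        simp [this]
      rw [← hWW2, hW2bot, Submodule.map_bot]
  obtain ⟨i, hi, -⟩ := hcomplete k σ hMat hIrr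
  have hkpos : Nonempty (Fin k) := by
    rw [← Fin.pos_iff_nonempty, hk]
    by_contra hpos
    push_neg at hpos
    have hk0 : Module.finrank ℂ N = 0 := Nat.le_zero.mp hpos
    have : N = ⊥ := Submodule.finrank_eq_zero.mp hk0
    apply hatom.1
    rw [eq_bot_iff]
    intro x hx
    have : x ∈ N := hx
    rw [‹N = ⊥›] at this
    simpa using this
  refine ⟨i, ?_, ?_⟩
  · exact Fin.pos_iff_nonempty.mpr (RepEquiv.nonempty hi hkpos)
  · intro g
    rw [LinearMap.trace_eq_matrix_trace ℂ b (regRes S g)]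
    exact RepEquiv.trace_eq hi g
end Match

section Key
variable {ι : Type*} [Fintype ι] {d : ι → ℕ}

set_option maxHeartbeats 1000000 in
lemma reg_key {G : Type} [Group G] [Fintype G] [DecidableEq G]
    {ρ : (i : ι) → G → Matrix (Fin (d i)) (Fin (d i)) ℂ}
    (hrep : ∀ i, IsMatRep (ρ i)) (hirr : ∀ i, IsIrredRep (ρ i))
    (hineq : ∀ i j, i ≠ j → ¬ RepEquiv (ρ i) (ρ j))
    (hcomplete : ∀ (k : ℕ) (σ : G → Matrix (Fin k) (Fin k) ℂ),
      IsMatRep σ → IsIrredRep σ → ∃! i : ι, RepEquiv σ (ρ i))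
    (x : G) :
    ∑ i : ι, (d i : ℂ) * (ρ i x).trace
      = if x = 1 then (Fintype.card G : ℂ) else 0 := by
  classical
  haveI : NeZero ((Fintype.card G : ℂ)) := ⟨Nat.cast_ne_zero.mpr Fintype.card_ne_zero⟩
  obtain ⟨s, hind, hsup, hsimple⟩ :=
    IsSemisimpleModule.exists_sSupIndep_sSup_simples_eq_top
      (MonoidAlgebra ℂ G) (MonoidAlgebra ℂ G)
  haveI : IsNoetherian (MonoidAlgebra ℂ G) (MonoidAlgebra ℂ G) :=
    isNoetherian_of_tower ℂ inferInstance
  have hfin : s.Finite := WellFoundedGT.finite_of_sSupIndep hind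
  haveI : Fintype s := hfin.fintype
  set N : s → Submodule ℂ (MonoidAlgebra ℂ G) :=
    fun S => (S : Submodule (MonoidAlgebra ℂ G) (MonoidAlgebra ℂ G)).restrictScalars ℂ with hNdef
  have hindA : iSupIndep (fun S : s => (S : Submodule (MonoidAlgebra ℂ G) (MonoidAlgebra ℂ G))) :=
    (sSupIndep_iff s).mp hind
  have hindN : iSupIndep N := by
    intro S
    rw [disjoint_iff, eq_bot_iff]
    intro y hy
    obtain ⟨hy1, hy2⟩ := Submodule.mem_inf.mp hy
    have hle : (⨆ (T : s) (_ : T ≠ S), N T)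
        ≤ (⨆ (T : s) (_ : T ≠ S),
            (T : Submodule (MonoidAlgebra ℂ G) (MonoidAlgebra ℂ G))).restrictScalars ℂ := by
      refine iSup_le fun T => iSup_le fun hT => ?_
      intro z hz
      rw [Submodule.restrictScalars_mem]
      exact (le_iSup₂ (f := fun (T : s) (_ : T ≠ S) =>
        (T : Submodule (MonoidAlgebra ℂ G) (MonoidAlgebra ℂ G))) T hT) hz
    have hy2' : y ∈ (⨆ (T : s) (_ : T ≠ S),
        (T : Submodule (MonoidAlgebra ℂ G) (MonoidAlgebra ℂ G))) := hle hy2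
    have hy1' : y ∈ (S : Submodule (MonoidAlgebra ℂ G) (MonoidAlgebra ℂ G)) := hy1
    have : y = 0 := Submodule.disjoint_def.mp (hindA S) y hy1' hy2'
    simp [this]
  have hsupN : (⨆ S : s, N S) = ⊤ := by
    rw [eq_top_iff]
    intro y _
    have hy : y ∈ sSup s := by rw [hsup]; trivial
    rw [sSup_eq_iSup'] at hy
    refine Submodule.iSup_induction
      (fun S : s => (S : Submodule (MonoidAlgebra ℂ G) (MonoidAlgebra ℂ G)))
      (motive := fun z => z ∈ ⨆ S : s, N S) hy ?_ ?_ ?_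
    · intro T z hz
      exact (le_iSup N T) (by rwa [hNdef, Submodule.restrictScalars_mem])
    · exact Submodule.zero_mem _
    · intro a b ha hb
      exact Submodule.add_mem _ ha hb
  have hint : DirectSum.IsInternal N :=
    (DirectSum.isInternal_submodule_iff_iSupIndep_and_iSup_eq_top N).mpr ⟨hindN, hsupN⟩
  have htr : ∀ g : G, (if g = 1 then (Fintype.card G : ℂ) else 0)
      = ∑ S : s, LinearMap.trace ℂ (N S) (regRes S g) := by
    intro g
    rw [← trace_regMap g]
    exact LinearMap.trace_eq_sum_trace_restrict hint (fun S => regMap_mapsTo' (S : Submodule (MonoidAlgebra ℂ G) (MonoidAlgebra ℂ G)) g)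
  choose iS hpos htrS using fun S : s =>
    simple_trace (d := d) (ρ := ρ) hcomplete S (hsimple S S.2)
  have hreg : ∀ g : G, (if g = 1 then (Fintype.card G : ℂ) else 0)
      = ∑ S : s, (ρ (iS S) g).trace := by
    intro g
    rw [htr g]
    exact Finset.sum_congr rfl fun S _ => htrS S g
  have hdm : ∀ j : ι, (d j : ℂ)
      = ((Finset.univ.filter (fun S : s => iS S = j)).card : ℂ) := by
    intro j
    have hrow : ∑ y : G, (if y = 1 then (Fintype.card G : ℂ) else 0) * (ρ j y⁻¹).trace
        = (Fintype.card G : ℂ) * (d j : ℂ) := by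
      rw [Finset.sum_eq_single 1]
      · simp [(hrep j).one]
      · intro y _ hy; simp [hy]
      · simp
    have hcol : ∑ y : G, (if y = 1 then (Fintype.card G : ℂ) else 0) * (ρ j y⁻¹).trace
        = ∑ S : s, ∑ y : G, (ρ (iS S) y).trace * (ρ j y⁻¹).trace := by
      calc ∑ y : G, (if y = 1 then (Fintype.card G : ℂ) else 0) * (ρ j y⁻¹).trace
          = ∑ y : G, (∑ S : s, (ρ (iS S) y).trace) * (ρ j y⁻¹).trace :=
            Finset.sum_congr rfl fun y _ => by rw [← hreg y]
        _ = ∑ y : G, ∑ S : s, (ρ (iS S) y).trace * (ρ j y⁻¹).trace := by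
            exact Finset.sum_congr rfl fun y _ => Finset.sum_mul _ _ _
        _ = ∑ S : s, ∑ y : G, (ρ (iS S) y).trace * (ρ j y⁻¹).trace := Finset.sum_comm
    have hval : ∀ S : s, ∑ y : G, (ρ (iS S) y).trace * (ρ j y⁻¹).trace
        = if iS S = j then (Fintype.card G : ℂ) else 0 := by
      intro S
      by_cases h : iS S = j
      · rw [if_pos h, ← h]
        haveI : Nonempty (Fin (d (iS S))) := ⟨⟨0, hpos S⟩⟩
        exact orth_self (hrep _) (hirr _)
      · rw [if_neg h]
        exact orth_ne (hrep j) (hrep (iS S)) (hirr j) (hirr (iS S)) (hineq j (iS S) (Ne.symm h))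
    have hcount : ∑ S : s, (if iS S = j then (Fintype.card G : ℂ) else 0)
        = (Fintype.card G : ℂ) * ((Finset.univ.filter (fun S : s => iS S = j)).card : ℂ) := by
      rw [← Finset.sum_filter, Finset.sum_const, nsmul_eq_mul, mul_comm]
    have hc : (Fintype.card G : ℂ) ≠ 0 := NeZero.ne _
    apply mul_left_cancel₀ hc
    rw [← hrow, hcol, Finset.sum_congr rfl fun S _ => hval S, hcount]
  calc ∑ i : ι, (d i : ℂ) * (ρ i x).trace
      = ∑ i : ι, ((Finset.univ.filter (fun S : s => iS S = i)).card : ℂ) * (ρ i x).trace :=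
        Finset.sum_congr rfl fun i _ => by rw [hdm i]
    _ = ∑ i : ι, ∑ S ∈ Finset.univ.filter (fun S : s => iS S = i), (ρ (iS S) x).trace := by
        refine Finset.sum_congr rfl fun i _ => ?_
        rw [Finset.sum_congr rfl (fun S hS => by rw [(Finset.mem_filter.mp hS).2]),
          Finset.sum_const, nsmul_eq_mul]
    _ = ∑ S : s, (ρ (iS S) x).trace :=
        Finset.sum_fiberwise_of_maps_to (fun S _ => Finset.mem_univ (iS S)) _
    _ = if x = 1 then (Fintype.card G : ℂ) else 0 := (hreg x).symm
end Key

section Transport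
variable {ι : Type*} [Fintype ι] {d : ι → ℕ}

lemma reg_key' {G : Type*} [Group G] [Fintype G] [DecidableEq G]
    {ρ : (i : ι) → G → Matrix (Fin (d i)) (Fin (d i)) ℂ}
    (hrep : ∀ i, IsMatRep (ρ i)) (hirr : ∀ i, IsIrredRep (ρ i))
    (hineq : ∀ i j, i ≠ j → ¬ RepEquiv (ρ i) (ρ j))
    (hcomplete : ∀ (k : ℕ) (σ : G → Matrix (Fin k) (Fin k) ℂ),
      IsMatRep σ → IsIrredRep σ → ∃! i : ι, RepEquiv σ (ρ i))
    (x : G) :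
    ∑ i : ι, (d i : ℂ) * (ρ i x).trace
      = if x = 1 then (Fintype.card G : ℂ) else 0 := by
  obtain ⟨G', hG', hF', ⟨em0⟩⟩ := Finite.exists_type_univ_nonempty_mulEquiv.{_, 0} G
  letI := hG'
  letI := hF'
  letI : DecidableEq G' := Classical.decEq G'
  let em : G' ≃* G := em0.symm
  set ρ' : (i : ι) → G' → Matrix (Fin (d i)) (Fin (d i)) ℂ :=
    fun i g0 => ρ i (em g0) with hρ'
  have hrep' : ∀ i, IsMatRep (ρ' i) := fun i =>
    ⟨fun g0 => (hrep i).1 _, fun g0 h0 => by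
      simp only [hρ', _root_.map_mul]
      exact (hrep i).2 _ _⟩
  have hirr' : ∀ i, IsIrredRep (ρ' i) := by
    intro i W hW
    refine hirr i W ?_
    intro g y hy
    have := hW (em.symm g) y hy
    simp only [hρ'] at this
    simpa only [MulEquiv.apply_symm_apply] using this
  have transpEquiv : ∀ {k : ℕ} (σ0 : G' → Matrix (Fin k) (Fin k) ℂ) (j : ι),
      RepEquiv σ0 (ρ' j) → RepEquiv (fun g => σ0 (em.symm g)) (ρ j) := by
    rintro k σ0 j ⟨T, T', h1, h2, h3⟩
    refine ⟨T, T', h1, h2, fun g => ?_⟩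
    have := h3 (em.symm g)
    simp only [hρ'] at this
    simpa only [MulEquiv.apply_symm_apply] using this
  have hineq' : ∀ i j, i ≠ j → ¬ RepEquiv (ρ' i) (ρ' j) := by
    rintro i j hij ⟨T, T', h1, h2, h3⟩
    refine hineq i j hij ⟨T, T', h1, h2, fun g => ?_⟩
    have := h3 (em.symm g)
    simp only [hρ'] at this
    simpa only [MulEquiv.apply_symm_apply] using this
  have hcomplete' : ∀ (k : ℕ) (σ0 : G' → Matrix (Fin k) (Fin k) ℂ),
      IsMatRep σ0 → IsIrredRep σ0 → ∃! i : ι, RepEquiv σ0 (ρ' i) := by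
    intro k σ0 hm hi
    have hm1 : IsMatRep (fun g => σ0 (em.symm g)) :=
      ⟨fun g => hm.1 _, fun g h => by simp only [_root_.map_mul]; exact hm.2 _ _⟩
    have hi1 : IsIrredRep (fun g => σ0 (em.symm g)) := by
      intro W hW
      refine hi W ?_
      intro g0 y hy
      have := hW (em g0) y hy
      simpa only [MulEquiv.symm_apply_apply] using this
    obtain ⟨i, hi2, hi3⟩ := hcomplete k (fun g => σ0 (em.symm g)) hm1 hi1
    refine ⟨i, ?_, ?_⟩
    · obtain ⟨T, T', h1, h2, h3⟩ := hi2
      refine ⟨T, T', h1, h2, fun g0 => ?_⟩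
      have := h3 (em g0)
      simp only [hρ']
      simpa only [MulEquiv.symm_apply_apply] using this
    · intro j hj
      exact hi3 j (transpEquiv σ0 j hj)
  have hkey := reg_key (d := d) hrep' hirr' hineq' hcomplete' (em.symm x)
  have hxx : em (em.symm x) = x := em.apply_symm_apply x
  rw [hρ'] at hkey
  simp only [hxx] at hkey
  rw [hkey]
  have hcard : Fintype.card G' = Fintype.card G := Fintype.card_congr em.toEquiv
  rw [hcard]
  split_ifs with h1 h2 h3
  · rfl
  · exact absurd (by rw [← hxx, h1, _root_.map_one]) h2
  · exact absurd (by rw [h3, _root_.map_one]) h1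
  · rfl
end Transport


set_option maxHeartbeats 1000000 in
/-- Let `G` be a finite group and `(ρ i)_{i : ι}` a complete set of
pairwise inequivalent irreducible complex matrix representations of `G` (degrees
`d i`).  Then for every `u : G → ℂ` and `g ∈ G` the Fourier inversion formula holds:
`u(g) = (1/|G|) ∑_{ρ∈Ĝ} d_ρ · Tr(ρ(g⁻¹) · F(u)(ρ))` where `F(u)(ρ) = ∑_h u(h) ρ(h)`. -/
theorem stmt6 {G : Type*} [Group G] [Fintype G]
    {ι : Type*} [Fintype ι] (d : ι → ℕ)
    (ρ : (i : ι) → G → Matrix (Fin (d i)) (Fin (d i)) ℂ)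
    (hrep : ∀ i, IsMatRep (ρ i))
    (hirr : ∀ i, IsIrredRep (ρ i))
    (hineq : ∀ i j, i ≠ j → ¬ RepEquiv (ρ i) (ρ j))
    (hcomplete : ∀ (k : ℕ) (σ : G → Matrix (Fin k) (Fin k) ℂ),
      IsMatRep σ → IsIrredRep σ → ∃! i : ι, RepEquiv σ (ρ i))
    (u : G → ℂ) (g : G) :
    u g = (1 / (Fintype.card G : ℂ)) *
      ∑ i : ι, (d i : ℂ) * Matrix.trace (ρ i g⁻¹ * ∑ h : G, u h • ρ i h) := by
  classical
  have hcard : (Fintype.card G : ℂ) ≠ 0 := Nat.cast_ne_zero.mpr Fintype.card_ne_zero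
  have hterm : ∀ i : ι, Matrix.trace (ρ i g⁻¹ * ∑ h : G, u h • ρ i h)
      = ∑ h : G, u h * (ρ i (g⁻¹ * h)).trace := by
    intro i
    rw [Matrix.mul_sum, Matrix.trace_sum]
    refine Finset.sum_congr rfl fun h _ => ?_
    rw [Matrix.mul_smul, Matrix.trace_smul, smul_eq_mul, ← (hrep i).2]
  have hmain : ∑ i : ι, (d i : ℂ) * Matrix.trace (ρ i g⁻¹ * ∑ h : G, u h • ρ i h)
      = (Fintype.card G : ℂ) * u g := by
    calc ∑ i : ι, (d i : ℂ) * Matrix.trace (ρ i g⁻¹ * ∑ h : G, u h • ρ i h)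
        = ∑ i : ι, ∑ h : G, u h * ((d i : ℂ) * (ρ i (g⁻¹ * h)).trace) := by
          refine Finset.sum_congr rfl fun i _ => ?_
          rw [hterm i, Finset.mul_sum]
          exact Finset.sum_congr rfl fun h _ => by ring
      _ = ∑ h : G, ∑ i : ι, u h * ((d i : ℂ) * (ρ i (g⁻¹ * h)).trace) := Finset.sum_comm
      _ = ∑ h : G, u h * (if g⁻¹ * h = 1 then (Fintype.card G : ℂ) else 0) := by
          refine Finset.sum_congr rfl fun h _ => ?_
          rw [← Finset.mul_sum, reg_key' hrep hirr hineq hcomplete (g⁻¹ * h)]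
      _ = (Fintype.card G : ℂ) * u g := by
          rw [Finset.sum_eq_single g]
          · rw [if_pos (inv_mul_cancel g), mul_comm]
          · intro h _ hh
            rw [if_neg, mul_zero]
            intro hc
            exact hh (by rwa [inv_mul_eq_one, eq_comm] at hc)
          · intro hg
            exact absurd (Finset.mem_univ g) hg
  rw [hmain]
  field_simp
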